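/- (Theorem 4.1(i)) Let α₁ ≤ ⋯ ≤ α_s be nondecreasing, γ ∈ [0,1), m(j) = ⌊γj⌋+1, and define S₂(γ,s,m) = m·α₁ + m·Σ (α_{s-m+k} - α_{s-m+k-1})/(k ∨ m(s-m+k)) over k with m-s+1 < k ≤ m and m ≥ m(s-m+k), and D₂(γ,s) = max_{1≤m≤s} S₂(γ,s,m). If every true-hypothesis p-value satisfies P(p̂ᵢ ≤ u) ≤ u for u ∈ (0,1), then the stepup procedure with critical values α·αᵢ/D₂(γ,s) satisfies P(FDP > γ) ≤ α for every joint distribution of the p-values. -/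

import Mathlib

open MeasureTheory Finset
open scoped Classical
open scoped ENNReal NNReal

/-- `orderStat p k` is the `k`-th smallest value (1-indexed) among `p 0, …, p (n-1)`. -/
noncomputable def orderStat {n : ℕ} (p : Fin n → ℝ) (k : ℕ) : ℝ :=
  if h : k - 1 < n then p (Tuple.sort p ⟨k - 1, h⟩) else 0

/-- The number of rejections of the stepup procedure with critical values
`c 1 ≤ … ≤ c n` (1-indexed): the largest `j` with `p_(j) ≤ c j` (0 if none). -/
noncomputable def numReject {n : ℕ} (c : ℕ → ℝ) (p : Fin n → ℝ) : ℕ :=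
  ((Finset.Icc 1 n).filter (fun j => orderStat p j ≤ c j)).sup id

/-- The indices rejected by the stepup procedure: those carrying the
`numReject c p` smallest p-values (via the sorting permutation). -/
noncomputable def rejectedSet {n : ℕ} (c : ℕ → ℝ) (p : Fin n → ℝ) : Finset (Fin n) :=
  (Finset.univ.filter (fun j : Fin n => (j : ℕ) + 1 ≤ numReject c p)).image (Tuple.sort p)

/-- The `k`-th smallest (1-indexed) of the p-values with indices in `I`. -/
noncomputable def trueOrderStat {n : ℕ} (I : Finset (Fin n)) (p : Fin n → ℝ) (k : ℕ) : ℝ :=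
  orderStat (fun j : Fin I.card => p (I.orderIsoOfFin rfl j).1) k

/-- The false discovery proportion of the stepup procedure: number of rejected
true hypotheses divided by the total number of rejections (0 if no rejections). -/
noncomputable def FDP {n : ℕ} (I : Finset (Fin n)) (c : ℕ → ℝ) (p : Fin n → ℝ) : ℝ :=
  if numReject c p = 0 then 0
  else ((rejectedSet c p ∩ I).card : ℝ) / (numReject c p : ℝ)

/-- `S₂(γ,s,m)`, written with the summation index `j = s - m + k ∈ (1, s]`:
`S₂ = m·α₁ + m·∑ (α_j - α_{j-1})/((j+m-s) ∨ m(j))` over `j` with `m ≥ m(j)`. -/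
noncomputable def S2val (c : ℕ → ℝ) (γ : ℝ) (s m : ℕ) : ℝ :=
  m * c 1 + m * ∑ j ∈ (Finset.Icc 2 s).filter (fun j : ℕ => Nat.floor (γ * (j : ℝ)) + 1 ≤ m),
    (c j - c (j - 1)) / ((max (j + m - s) (Nat.floor (γ * (j : ℝ)) + 1) : ℕ) : ℝ)

private lemma tele_sum (κ : ℕ → ℝ) {a b : ℕ} (hab : a ≤ b) :
    ∑ r ∈ Finset.Icc a b, (κ r - κ (r+1)) = κ a - κ (b+1) := by
  induction b, hab using Nat.le_induction with
  | base => simp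
  | succ n hn ih =>
      rw [Finset.sum_Icc_succ_top (by omega), ih]; ring

private lemma abel_sum (κ c : ℕ → ℝ) {J : ℕ} (hJ : 1 ≤ J) :
    ∑ r ∈ Finset.Icc 1 J, (κ r - κ (r+1)) * c r
      = κ 1 * c 1 - κ (J+1) * c J + ∑ j ∈ Finset.Icc 2 J, κ j * (c j - c (j-1)) := by
  induction J, hJ using Nat.le_induction with
  | base => norm_num; ring
  | succ n hn ih =>
      rw [Finset.sum_Icc_succ_top (by omega), ih, Finset.sum_Icc_succ_top (by omega)]
      have h1 : n + 1 - 1 = n := rfl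
      rw [h1]; ring

/-- Theorem 4.1(i): the stepup procedure with critical values `α·αᵢ/D₂(γ,s)`
satisfies `P(FDP > γ) ≤ α` for every joint distribution of the p-values. -/
theorem stmt14 {Ω : Type*} [MeasurableSpace Ω] (μ : Measure Ω) [IsProbabilityMeasure μ]
    {s : ℕ} (hs : 1 ≤ s)
    (c : ℕ → ℝ) (hc : ∀ i j, 1 ≤ i → i ≤ j → j ≤ s → c i ≤ c j) (hc0 : 0 ≤ c 1)
    (γ : ℝ) (hγ : γ ∈ Set.Ico (0 : ℝ) 1) (α : ℝ) (hα : α ∈ Set.Ioo (0 : ℝ) 1)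
    (p : Fin s → Ω → ℝ) (hmeas : ∀ i, Measurable (p i))
    (I : Finset (Fin s))
    (hp : ∀ i ∈ I, ∀ u ∈ Set.Ioo (0 : ℝ) 1, μ {ω | p i ω ≤ u} ≤ ENNReal.ofReal u) :
    (μ {ω | γ < FDP I
        (fun i => α * c i / ((Finset.Icc 1 s).sup' (Finset.nonempty_Icc.mpr hs) (S2val c γ s)))
        (fun i => p i ω)}).toReal ≤ α := by
  obtain ⟨hγ0, hγ1⟩ := hγ
  obtain ⟨hα0, hα1⟩ := hα
  set D := (Finset.Icc 1 s).sup' (Finset.nonempty_Icc.mpr hs) (S2val c γ s) with hDdef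
  set β : ℕ → ℝ := fun i => α * c i / D with hβdef
  set t := I.card with htdef
  have hts : t ≤ s := by
    have := Finset.card_le_univ I
    simpa [htdef] using this
  have hcnn : ∀ j, 1 ≤ j → j ≤ s → 0 ≤ c j := fun j h1 h2 => hc0.trans (hc 1 j le_rfl h1 h2)
  have hsum_nonneg : ∀ m : ℕ, 0 ≤ ∑ j ∈ (Finset.Icc 2 s).filter
      (fun j : ℕ => Nat.floor (γ * (j : ℝ)) + 1 ≤ m),
      (c j - c (j - 1)) / ((max (j + m - s) (Nat.floor (γ * (j : ℝ)) + 1) : ℕ) : ℝ) := by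
    intro m
    apply Finset.sum_nonneg
    intro j hj
    obtain ⟨hj2, hjs⟩ := Finset.mem_Icc.mp (Finset.mem_filter.mp hj).1
    apply div_nonneg
    · have := hc (j-1) j (by omega) (by omega) hjs
      linarith
    · exact Nat.cast_nonneg _
  have hD0 : 0 ≤ D := by
    have h2 := hsum_nonneg 1
    have h1 : c 1 ≤ S2val c γ s 1 := by
      unfold S2val
      rw [Nat.cast_one, one_mul, one_mul]
      linarith
    have h3 : S2val c γ s 1 ≤ D := Finset.le_sup' (S2val c γ s) (Finset.mem_Icc.mpr ⟨le_rfl, hs⟩)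
    linarith
  have hβnn : ∀ j, 1 ≤ j → j ≤ s → 0 ≤ β j := by
    intro j h1 h2
    simp only [hβdef]
    exact div_nonneg (mul_nonneg hα0.le (hcnn j h1 h2)) hD0
  have hβmono : ∀ i j, 1 ≤ i → i ≤ j → j ≤ s → β i ≤ β j := by
    intro i j h1 hij hjs
    simp only [hβdef]
    rw [div_eq_mul_inv, div_eq_mul_inv]
    exact mul_le_mul_of_nonneg_right
      (mul_le_mul_of_nonneg_left (hc i j h1 hij hjs) hα0.le) (inv_nonneg.mpr hD0)
  rcases Nat.eq_zero_or_pos t with ht0 | ht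
  · -- no true hypotheses: FDP is identically 0
    have hI : I = ∅ := Finset.card_eq_zero.mp ht0
    have hempty : {ω | γ < FDP I β (fun i => p i ω)} = ∅ := by
      ext ω
      simp only [Set.mem_setOf_eq, Set.mem_empty_iff_false, iff_false, not_lt]
      unfold FDP
      split
      · exact hγ0
      · simp [hI, hγ0]
    rw [hempty]
    simp [hα0.le]
  · -- main case
    set mf : ℕ → ℕ := fun j => Nat.floor (γ * (j : ℝ)) + 1 with hmfdef
    set kf : ℕ → ℕ := fun j => max (mf j) (j + t - s) with hkfdef
    have hmf_mono : Monotone mf := by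
      intro i j hij
      simp only [hmfdef]
      have : γ * (i : ℝ) ≤ γ * (j : ℝ) :=
        mul_le_mul_of_nonneg_left (Nat.cast_le.mpr hij) hγ0
      exact add_le_add_left (Nat.floor_le_floor this) 1
    have hkf_mono : Monotone kf := by
      intro i j hij
      simp only [hkfdef]
      exact max_le_max (hmf_mono hij) (by omega)
    have hmf1 : ∀ j, 1 ≤ mf j := fun j => by simp only [hmfdef]; omega
    have hkf1 : ∀ j, 1 ≤ kf j := fun j => le_trans (hmf1 j) (le_max_left _ _)
    have hmf1eq : mf 1 = 1 := by
      have h0 : Nat.floor (γ * ((1:ℕ) : ℝ)) = 0 := by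
        apply Nat.floor_eq_zero.mpr
        rw [Nat.cast_one, mul_one]
        exact hγ1
      simp only [hmfdef, h0]
    set Vv := (Finset.Icc 1 s).filter (fun j => mf j ≤ t) with hVvdef
    have h1V : (1 : ℕ) ∈ Vv := by
      simp only [hVvdef, Finset.mem_filter, Finset.mem_Icc, hmf1eq]
      exact ⟨⟨le_rfl, hs⟩, ht⟩
    set J := Vv.sup id with hJdef
    have hJmem : J ∈ Vv := by
      obtain ⟨b, hb, hbe⟩ := Finset.exists_mem_eq_sup Vv ⟨1, h1V⟩ id
      rw [hJdef, hbe]; exact hb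
    have hJ1 : 1 ≤ J := Finset.le_sup (f := id) h1V
    have hJs : J ≤ s := (Finset.mem_Icc.mp (Finset.mem_filter.mp hJmem).1).2
    have hJt : mf J ≤ t := (Finset.mem_filter.mp hJmem).2
    set κ : ℕ → ℝ := fun j => if j ≤ J then 1 / (kf j : ℝ) else 0 with hκdef
    have hκval : ∀ r, r ≤ J → κ r = 1 / (kf r : ℝ) := by
      intro r hr; simp only [hκdef, if_pos hr]
    have hκJ1 : κ (J + 1) = 0 := by
      simp only [hκdef, if_neg (by omega : ¬ J + 1 ≤ J)]
    have hκnn : ∀ r, 0 ≤ κ r - κ (r+1) := by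
      intro r
      by_cases hr : r ≤ J
      · by_cases hr1 : r + 1 ≤ J
        · rw [hκval r hr, hκval (r+1) hr1]
          have hpos : (0:ℝ) < (kf r : ℝ) := by exact_mod_cast hkf1 r
          have hle : (kf r : ℝ) ≤ (kf (r+1) : ℝ) := by
            exact_mod_cast hkf_mono (Nat.le_succ r)
          have := one_div_le_one_div_of_le hpos hle
          linarith
        · rw [hκval r hr]
          simp only [hκdef, if_neg hr1]
          have hpos : (0:ℝ) < (kf r : ℝ) := by exact_mod_cast hkf1 r
          have : 0 ≤ 1 / (kf r : ℝ) := by positivity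
          linarith
      · have hr1 : ¬ r + 1 ≤ J := by omega
        simp only [hκdef, if_neg hr, if_neg hr1]
        norm_num
    set Ncut : ℝ → Ω → ℕ := fun u ω => (I.filter (fun i => p i ω ≤ u)).card with hNdef
    -- the deterministic core of the argument
    have hkey : ∀ ω, γ < FDP I β (fun i => p i ω) →
        ∃ r, 1 ≤ r ∧ r ≤ J ∧ kf r ≤ Ncut (β r) ω := by
      intro ω hω
      set q : Fin s → ℝ := fun i => p i ω with hqdef
      set R := numReject β q with hRdef
      have hRdef' : R = ((Finset.Icc 1 s).filter (fun j => orderStat q j ≤ β j)).sup id := rfl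
      simp only [FDP] at hω
      rw [← hRdef] at hω
      have hR0 : R ≠ 0 := by
        intro h
        rw [if_pos h] at hω
        exact absurd hω (not_lt.mpr hγ0)
      rw [if_neg hR0] at hω
      have hFne : R ∈ (Finset.Icc 1 s).filter (fun j => orderStat q j ≤ β j) := by
        have hne : ((Finset.Icc 1 s).filter (fun j => orderStat q j ≤ β j)).Nonempty := by
          by_contra h
          rw [Finset.not_nonempty_iff_eq_empty] at h
          apply hR0
          rw [hRdef', h, Finset.sup_empty]
          rfl
        obtain ⟨b, hb, hbe⟩ := Finset.exists_mem_eq_sup _ hne id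
        have : R = b := by rw [hRdef', hbe]; rfl
        rw [this]; exact hb
      obtain ⟨hR1, hRs⟩ := Finset.mem_Icc.mp (Finset.mem_filter.mp hFne).1
      have hOS : orderStat q R ≤ β R := (Finset.mem_filter.mp hFne).2
      set Vc := (rejectedSet β q ∩ I).card with hVcdef
      have hRpos : (0:ℝ) < (R:ℝ) := by exact_mod_cast Nat.pos_of_ne_zero hR0
      have hγR : γ * (R:ℝ) < (Vc:ℝ) := by
        calc γ * (R:ℝ) < ((Vc:ℝ) / (R:ℝ)) * (R:ℝ) := by
              exact mul_lt_mul_of_pos_right hω hRpos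
          _ = (Vc:ℝ) := by field_simp
      have hmR : mf R ≤ Vc := by
        have hfl : Nat.floor (γ * (R:ℝ)) < Vc := by
          rw [Nat.floor_lt (mul_nonneg hγ0 (Nat.cast_nonneg R))]
          exact_mod_cast hγR
        simp only [hmfdef]; omega
      have hVt : Vc ≤ t := by
        rw [hVcdef, htdef]
        exact Finset.card_le_card Finset.inter_subset_right
      have hrejcard : (rejectedSet β q).card = R := by
        unfold rejectedSet
        rw [← hRdef]
        rw [Finset.card_image_of_injective _ (Tuple.sort q).injective]
        have himg : (Finset.univ.filter (fun j : Fin s => (j:ℕ) + 1 ≤ R)).image Fin.val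
            = Finset.range R := by
          ext a
          simp only [Finset.mem_image, Finset.mem_filter, Finset.mem_univ, true_and,
            Finset.mem_range]
          constructor
          · rintro ⟨j, hj, rfl⟩; omega
          · intro ha
            exact ⟨⟨a, lt_of_lt_of_le ha hRs⟩, by simpa using ha, rfl⟩
        have hcard := congrArg Finset.card himg
        rwa [Finset.card_image_of_injective _ Fin.val_injective, Finset.card_range] at hcard
      have hdiff : (rejectedSet β q \ I).card ≤ s - t := by
        calc (rejectedSet β q \ I).card ≤ (Finset.univ \ I).card := by
              apply Finset.card_le_card
              intro x hx
              rw [Finset.mem_sdiff] at hx ⊢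
              exact ⟨Finset.mem_univ x, hx.2⟩
          _ = s - t := by
              rw [Finset.card_sdiff_of_subset (Finset.subset_univ I)]
              simp [htdef]
      have hVR : R + t ≤ Vc + s := by
        have h1 : Vc + (rejectedSet β q \ I).card = R := by
          rw [hVcdef, ← hrejcard]
          exact Finset.card_inter_add_card_sdiff _ _
        omega
      have hkR : kf R ≤ Vc := by
        simp only [hkfdef]
        exact max_le hmR (by omega)
      have hRJ : R ≤ J := by
        have hmem : R ∈ Vv := by
          simp only [hVvdef, Finset.mem_filter, Finset.mem_Icc]
          exact ⟨⟨hR1, hRs⟩, le_trans hmR hVt⟩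
        exact Finset.le_sup (f := id) hmem
      have hrejle : ∀ i ∈ rejectedSet β q, q i ≤ β R := by
        intro i hi
        unfold rejectedSet at hi
        rw [← hRdef] at hi
        rw [Finset.mem_image] at hi
        obtain ⟨j, hj, rfl⟩ := hi
        rw [Finset.mem_filter] at hj
        have hjR : (j:ℕ) + 1 ≤ R := hj.2
        have hlt : R - 1 < s := by omega
        have hle : j ≤ (⟨R - 1, hlt⟩ : Fin s) := by
          rw [Fin.le_def]
          simp only []
          omega
        have h2 : q (Tuple.sort q j) ≤ q (Tuple.sort q ⟨R-1, hlt⟩) :=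
          Tuple.monotone_sort q hle
        have h3 : orderStat q R = q (Tuple.sort q ⟨R-1, hlt⟩) := by
          unfold orderStat
          rw [dif_pos hlt]
        exact h2.trans (h3 ▸ hOS)
      refine ⟨R, hR1, hRJ, ?_⟩
      calc kf R ≤ Vc := hkR
        _ ≤ Ncut (β R) ω := by
            rw [hVcdef]
            apply Finset.card_le_card
            intro i hi
            rw [Finset.mem_inter] at hi
            simp only [hNdef, Finset.mem_filter]
            exact ⟨hi.2, hrejle i hi.1⟩
    -- superuniformity at all thresholds
    have hms : ∀ (i : Fin s) (u : ℝ), MeasurableSet {ω | p i ω ≤ u} :=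
      fun i u => measurableSet_le (hmeas i) measurable_const
    have hsu : ∀ i ∈ I, ∀ u : ℝ, μ {ω | p i ω ≤ u} ≤ ENNReal.ofReal u := by
      intro i hi u
      rcases le_or_gt u 0 with hu | hu
      · rw [ENNReal.ofReal_eq_zero.mpr hu]
        have key : ∀ ε : ℝ≥0, 0 < ε → μ {ω | p i ω ≤ u} ≤ 0 + ε := by
          intro ε hε
          set v : ℝ := min ((ε:ℝ)/2) (1/2) with hv
          have hε0 : (0:ℝ) < (ε:ℝ) := hε
          have hv0 : 0 < v := lt_min (by positivity) (by norm_num)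
          have hv1 : v < 1 := lt_of_le_of_lt (min_le_right _ _) (by norm_num)
          calc μ {ω | p i ω ≤ u} ≤ μ {ω | p i ω ≤ v} :=
                measure_mono (fun ω h => le_trans h (le_trans hu hv0.le))
            _ ≤ ENNReal.ofReal v := hp i hi v ⟨hv0, hv1⟩
            _ ≤ 0 + ε := by
                rw [zero_add, ← ENNReal.ofReal_coe_nnreal]
                apply ENNReal.ofReal_le_ofReal
                calc v ≤ (ε:ℝ)/2 := min_le_left _ _
                  _ ≤ (ε:ℝ) := by linarith
        exact ENNReal.le_of_forall_pos_le_add (fun ε hε _ => key ε hε)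
      · rcases lt_or_ge u 1 with hu1 | hu1
        · exact hp i hi u ⟨hu, hu1⟩
        · calc μ {ω | p i ω ≤ u} ≤ 1 := prob_le_one
            _ = ENNReal.ofReal 1 := ENNReal.ofReal_one.symm
            _ ≤ ENNReal.ofReal u := ENNReal.ofReal_le_ofReal hu1
    -- counting function as a sum of indicators
    have hgrep : ∀ (u : ℝ) (ω : Ω), ((Ncut u ω : ℕ) : ℝ≥0∞)
        = ∑ i ∈ I, Set.indicator {ω' | p i ω' ≤ u} (fun _ => (1:ℝ≥0∞)) ω := by
      intro u ω
      simp only [hNdef]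
      rw [Finset.card_filter]
      push_cast
      apply Finset.sum_congr rfl
      intro i _
      by_cases h : p i ω ≤ u
      · simp [Set.indicator_apply, Set.mem_setOf_eq, h]
      · simp [Set.indicator_apply, Set.mem_setOf_eq, h]
    have hNm : ∀ u : ℝ, Measurable (fun ω => ((Ncut u ω : ℕ) : ℝ≥0∞)) := by
      intro u
      have hrw : (fun ω => ((Ncut u ω : ℕ) : ℝ≥0∞))
          = fun ω => ∑ i ∈ I, Set.indicator {ω' | p i ω' ≤ u} (fun _ => (1:ℝ≥0∞)) ω :=
        funext (hgrep u)
      rw [hrw]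
      exact Finset.measurable_sum _ (fun i _ => measurable_const.indicator (hms i u))
    set h' : Ω → ℝ≥0∞ := fun ω => ∑ r ∈ Finset.Icc 1 J,
        ENNReal.ofReal (κ r - κ (r+1)) * ((Ncut (β r) ω : ℕ) : ℝ≥0∞) with hh'def
    have hh'meas : Measurable h' := by
      apply Finset.measurable_sum
      intro r _
      exact (hNm (β r)).const_mul _
    -- pointwise lower bound on the event
    have hpt : ∀ ω, γ < FDP I β (fun i => p i ω) → (1:ℝ≥0∞) ≤ h' ω := by
      intro ω hω
      obtain ⟨r₀, hr₀1, hr₀J, hr₀k⟩ := hkey ω hω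
      have hsubset : Finset.Icc r₀ J ⊆ Finset.Icc 1 J := Finset.Icc_subset_Icc_left hr₀1
      have hconstsum : ∑ r ∈ Finset.Icc r₀ J, ENNReal.ofReal (κ r - κ (r+1))
          = ENNReal.ofReal (κ r₀ - κ (J+1)) := by
        rw [← ENNReal.ofReal_sum_of_nonneg (fun r _ => hκnn r), tele_sum κ hr₀J]
      have hkfpos : (kf r₀ : ℝ) ≠ 0 := by
        have := hkf1 r₀; positivity
      have h1 : (1:ℝ≥0∞) = ENNReal.ofReal (κ r₀ - κ (J+1)) * ((kf r₀ : ℕ) : ℝ≥0∞) := by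
        rw [hκJ1, hκval r₀ hr₀J, sub_zero, ← ENNReal.ofReal_natCast (kf r₀),
          ← ENNReal.ofReal_mul (by positivity)]
        rw [one_div_mul_cancel hkfpos]
        simp
      have hstep : ∀ r ∈ Finset.Icc r₀ J,
          ENNReal.ofReal (κ r - κ (r+1)) * ((kf r₀ : ℕ) : ℝ≥0∞)
            ≤ ENNReal.ofReal (κ r - κ (r+1)) * ((Ncut (β r) ω : ℕ) : ℝ≥0∞) := by
        intro r hr
        obtain ⟨hrl, hru⟩ := Finset.mem_Icc.mp hr
        apply mul_le_mul_right
        have hsub2 : I.filter (fun i => p i ω ≤ β r₀) ⊆ I.filter (fun i => p i ω ≤ β r) := by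
          intro i hi
          rw [Finset.mem_filter] at hi ⊢
          exact ⟨hi.1, hi.2.trans (hβmono r₀ r hr₀1 hrl (hru.trans hJs))⟩
        have : kf r₀ ≤ Ncut (β r) ω := le_trans hr₀k (Finset.card_le_card hsub2)
        exact_mod_cast this
      calc (1:ℝ≥0∞) = ENNReal.ofReal (κ r₀ - κ (J+1)) * ((kf r₀ : ℕ) : ℝ≥0∞) := h1
        _ = (∑ r ∈ Finset.Icc r₀ J, ENNReal.ofReal (κ r - κ (r+1))) * ((kf r₀ : ℕ) : ℝ≥0∞) := by
            rw [hconstsum]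
        _ = ∑ r ∈ Finset.Icc r₀ J,
              ENNReal.ofReal (κ r - κ (r+1)) * ((kf r₀ : ℕ) : ℝ≥0∞) := Finset.sum_mul _ _ _
        _ ≤ ∑ r ∈ Finset.Icc r₀ J,
              ENNReal.ofReal (κ r - κ (r+1)) * ((Ncut (β r) ω : ℕ) : ℝ≥0∞) :=
            Finset.sum_le_sum hstep
        _ ≤ h' ω := by
            rw [hh'def]
            exact Finset.sum_le_sum_of_subset hsubset
    -- final real-number bound
    have hfinal : ∑ r ∈ Finset.Icc 1 J, (κ r - κ (r+1)) * ((t:ℝ) * β r) ≤ α := by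
      rcases hD0.lt_or_eq with hD | hD
      · have hsum_eq : ∑ r ∈ Finset.Icc 1 J, (κ r - κ (r+1)) * ((t:ℝ) * β r)
            = (t:ℝ) * (α/D) * (κ 1 * c 1 - κ (J+1) * c J
                + ∑ j ∈ Finset.Icc 2 J, κ j * (c j - c (j-1))) := by
          rw [← abel_sum κ c hJ1, Finset.mul_sum]
          apply Finset.sum_congr rfl
          intro r _
          simp only [hβdef]
          ring
        rw [hsum_eq, hκJ1, hκval 1 hJ1]
        have hS2 : S2val c γ s t ≤ D :=
          Finset.le_sup' (S2val c γ s) (Finset.mem_Icc.mpr ⟨ht, hts⟩)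
        have hfilter : (Finset.Icc 2 s).filter (fun j : ℕ => Nat.floor (γ * (j:ℝ)) + 1 ≤ t)
            = Finset.Icc 2 J := by
          ext j
          simp only [Finset.mem_filter, Finset.mem_Icc]
          constructor
          · rintro ⟨⟨h2, hjs⟩, hmj⟩
            refine ⟨h2, ?_⟩
            have hmem : j ∈ Vv := by
              simp only [hVvdef, Finset.mem_filter, Finset.mem_Icc]
              exact ⟨⟨by omega, hjs⟩, hmj⟩
            exact Finset.le_sup (f := id) hmem
          · rintro ⟨h2, hjJ⟩
            refine ⟨⟨h2, hjJ.trans hJs⟩, ?_⟩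
            have h4 : mf j ≤ mf J := hmf_mono hjJ
            have h5 := hJt
            simp only [hmfdef] at h4 h5 ⊢
            omega
        have hX : (t:ℝ) * (1 / (kf 1 : ℝ) * c 1 - 0 * c J
              + ∑ j ∈ Finset.Icc 2 J, κ j * (c j - c (j-1)))
            ≤ S2val c γ s t := by
          have hterm : ∀ j ∈ Finset.Icc 2 J, κ j * (c j - c (j-1))
              = (c j - c (j - 1)) / ((max (j + t - s) (Nat.floor (γ * (j:ℝ)) + 1) : ℕ) : ℝ) := by
            intro j hj
            obtain ⟨h2, hjJ⟩ := Finset.mem_Icc.mp hj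
            rw [hκval j hjJ]
            have hmax : max (j + t - s) (Nat.floor (γ * (j:ℝ)) + 1) = kf j := by
              simp only [hkfdef, hmfdef]
              omega
            rw [hmax]
            ring
          unfold S2val
          rw [hfilter, Finset.sum_congr rfl hterm]
          have h1k : 1 / (kf 1 : ℝ) * c 1 ≤ c 1 := by
            have hge : (1:ℝ) ≤ (kf 1 : ℝ) := by exact_mod_cast hkf1 1
            have : 1 / (kf 1 : ℝ) ≤ 1 := by
              rw [div_le_one (by linarith)]
              exact hge
            nlinarith [hc0]
          have ht0 : (0:ℝ) ≤ (t:ℝ) := Nat.cast_nonneg t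
          have hmul := mul_le_mul_of_nonneg_left h1k ht0
          rw [zero_mul, sub_zero, mul_add]
          linarith
        have h3 := mul_le_mul_of_nonneg_left (hX.trans hS2) (div_nonneg hα0.le hD.le)
        rw [div_mul_cancel₀ α hD.ne'] at h3
        linarith
      · have hz : ∀ r ∈ Finset.Icc 1 J, (κ r - κ (r+1)) * ((t:ℝ) * β r) = 0 := by
          intro r _
          simp only [hβdef, ← hD, div_zero, mul_zero]
        rw [Finset.sum_eq_zero hz]
        exact hα0.le
    -- put everything together
    have hchain : μ {ω | γ < FDP I β (fun i => p i ω)} ≤ ENNReal.ofReal α := by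
      calc μ {ω | γ < FDP I β (fun i => p i ω)}
          ≤ μ {ω | (1:ℝ≥0∞) ≤ h' ω} := measure_mono (fun ω hω => hpt ω hω)
        _ = 1 * μ {ω | (1:ℝ≥0∞) ≤ h' ω} := (one_mul _).symm
        _ ≤ ∫⁻ ω, h' ω ∂μ := mul_meas_ge_le_lintegral₀ hh'meas.aemeasurable 1
        _ = ∑ r ∈ Finset.Icc 1 J, ENNReal.ofReal (κ r - κ (r+1))
              * ∑ i ∈ I, μ {ω | p i ω ≤ β r} := by
            simp only [hh'def]
            rw [lintegral_finset_sum _ (fun r _ => (hNm (β r)).const_mul _)]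
            apply Finset.sum_congr rfl
            intro r _
            rw [lintegral_const_mul _ (hNm (β r))]
            congr 1
            calc ∫⁻ ω, ((Ncut (β r) ω : ℕ) : ℝ≥0∞) ∂μ
                = ∫⁻ ω, ∑ i ∈ I,
                    Set.indicator {ω' | p i ω' ≤ β r} (fun _ => (1:ℝ≥0∞)) ω ∂μ := by
                  simp_rw [hgrep (β r)]
              _ = ∑ i ∈ I, μ {ω | p i ω ≤ β r} := by
                  rw [lintegral_finset_sum _
                    (fun i _ => measurable_const.indicator (hms i (β r)))]
                  apply Finset.sum_congr rfl
                  intro i _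
                  exact lintegral_indicator_one (hms i (β r))
        _ ≤ ∑ r ∈ Finset.Icc 1 J, ENNReal.ofReal (κ r - κ (r+1))
              * ((t : ℝ≥0∞) * ENNReal.ofReal (β r)) := by
            apply Finset.sum_le_sum
            intro r hr
            apply mul_le_mul_right
            calc ∑ i ∈ I, μ {ω | p i ω ≤ β r} ≤ ∑ _i ∈ I, ENNReal.ofReal (β r) :=
                Finset.sum_le_sum (fun i hi => hsu i hi (β r))
              _ = (t : ℝ≥0∞) * ENNReal.ofReal (β r) := by
                  rw [Finset.sum_const, ← htdef, nsmul_eq_mul]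
        _ = ENNReal.ofReal (∑ r ∈ Finset.Icc 1 J, (κ r - κ (r+1)) * ((t:ℝ) * β r)) := by
            rw [ENNReal.ofReal_sum_of_nonneg]
            · apply Finset.sum_congr rfl
              intro r hr
              obtain ⟨hr1, hrJ⟩ := Finset.mem_Icc.mp hr
              rw [ENNReal.ofReal_mul (hκnn r),
                ENNReal.ofReal_mul (Nat.cast_nonneg t), ENNReal.ofReal_natCast]
            · intro r hr
              obtain ⟨hr1, hrJ⟩ := Finset.mem_Icc.mp hr
              exact mul_nonneg (hκnn r)
                (mul_nonneg (Nat.cast_nonneg t) (hβnn r hr1 (hrJ.trans hJs)))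
        _ ≤ ENNReal.ofReal α := ENNReal.ofReal_le_ofReal hfinal
    exact ENNReal.toReal_le_of_le_ofReal hα0.le hchain
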